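/- Let δ ∈ (0,1) and S(a) = √(1 − 4a + 4(1−δ²)a²). The function G(a) = [ (1−2a+S(a)) (1−S(a))^{1+δ} ] / [ (1−2a−S(a)) (1+S(a))^{1+δ} ] is strictly decreasing on the open interval (0, 1/(2+2δ)), and its limit as a → 1/(2+2δ) is 1. Consequently G(a) > 1 for a ∈ (0, 1/(2+2δ)). -/

import Mathlib

open Real Filter

/-- `S(a) = √(1 − 4a + 4(1−δ²)a²)`. -/
noncomputable def Sf (δ a : ℝ) : ℝ := Real.sqrt (1 - 4*a + 4*(1-δ^2)*a^2)

/-- The ratio function `G` from equation (eq:finala). -/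
noncomputable def G (δ a : ℝ) : ℝ :=
  ((1 - 2*a + Sf δ a) * (1 - Sf δ a) ^ (1+δ)) / ((1 - 2*a - Sf δ a) * (1 + Sf δ a) ^ (1+δ))

set_option maxHeartbeats 1000000 in
lemma G_hasDeriv (δ : ℝ) (hδ0 : 0 < δ) (hδ1 : δ < 1) {a : ℝ} (ha0 : 0 < a)
    (ha1 : a < 1/(2+2*δ)) : ∃ V < 0, HasDerivAt (G δ) V a := by
  have h2δ : (0:ℝ) < 2+2*δ := by linarith
  have haa : (2+2*δ)*a < 1 := by
    rw [div_eq_inv_mul, mul_one] at ha1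
    calc (2+2*δ)*a < (2+2*δ)*(2+2*δ)⁻¹ := by
          exact mul_lt_mul_of_pos_left ha1 h2δ
      _ = 1 := mul_inv_cancel₀ (ne_of_gt h2δ)
  have ha2 : a < 1/2 := by nlinarith
  have hc : 0 < 1-δ^2 := by nlinarith
  have hf1 : 0 < 1 - 2*a - 2*δ*a := by nlinarith
  have hf2 : 0 < 1 - 2*a + 2*δ*a := by nlinarith [mul_pos hδ0 ha0]
  have hQpos : 0 < 1 - 4*a + 4*(1-δ^2)*a^2 := by nlinarith [mul_pos hf1 hf2]
  set s : ℝ := Sf δ a with hs_def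
  have hs_pos : 0 < s := Real.sqrt_pos.mpr hQpos
  have hsq : s^2 = 1 - 4*a + 4*(1-δ^2)*a^2 := Real.sq_sqrt hQpos.le
  have hca : (1-δ^2)*a < 1 := by nlinarith
  have hs1 : s < 1 := by
    rw [hs_def, Sf]
    rw [Real.sqrt_lt' one_pos]
    nlinarith [mul_pos ha0 (show 0 < 1 - (1-δ^2)*a by linarith)]
  have hBpos : 0 < 1 - 2*a - s := by
    have hda : 0 < (δ*a)^2 := by positivity
    have : s < 1 - 2*a := by
      rw [hs_def, Sf, Real.sqrt_lt' (show (0:ℝ) < 1 - 2*a by linarith)]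
      nlinarith
    linarith
  have hApos : 0 < 1 - 2*a + s := by nlinarith
  have hu1 : (0:ℝ) < 1 - s := by linarith
  have hv1 : (0:ℝ) < 1 + s := by linarith
  -- derivative of the inner polynomial
  have hQd : HasDerivAt (fun x : ℝ => 1 - 4*x + 4*(1-δ^2)*x^2)
      (-4 + 4*(1-δ^2)*(2*a)) a := by
    have h1 : HasDerivAt (fun x : ℝ => 1 - 4*x) (-4) a := by
      simpa using ((hasDerivAt_id a).const_mul (4:ℝ)).const_sub 1
    have h2 : HasDerivAt (fun x : ℝ => 4*(1-δ^2)*x^2) (4*(1-δ^2)*(2*a)) a := by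
      simpa using (hasDerivAt_pow 2 a).const_mul (4*(1-δ^2))
    exact h1.add h2
  set s' : ℝ := (-4 + 4*(1-δ^2)*(2*a)) / (2 * s) with hs'_def
  have hsd : HasDerivAt (Sf δ) s' a := by
    have := hQd.sqrt (ne_of_gt hQpos)
    exact this
  -- numerator
  have hAd : HasDerivAt (fun x : ℝ => 1 - 2*x + Sf δ x) (-2 + s') a := by
    have h1 : HasDerivAt (fun x : ℝ => 1 - 2*x) (-2) a := by
      simpa using ((hasDerivAt_id a).const_mul (2:ℝ)).const_sub 1
    exact h1.add hsd
  have hud : HasDerivAt (fun x : ℝ => 1 - Sf δ x) (-s') a := hsd.const_sub 1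
  have hvd : HasDerivAt (fun x : ℝ => 1 + Sf δ x) s' a := by
    simpa using hsd.const_add 1
  have hUd : HasDerivAt (fun x : ℝ => (1 - Sf δ x) ^ (1+δ))
      (-s' * (1+δ) * (1 - s) ^ ((1+δ)-1)) a :=
    hud.rpow_const (Or.inl (by positivity))
  have hVd : HasDerivAt (fun x : ℝ => (1 + Sf δ x) ^ (1+δ))
      (s' * (1+δ) * (1 + s) ^ ((1+δ)-1)) a :=
    hvd.rpow_const (Or.inl (by positivity))
  have hNd : HasDerivAt (fun x : ℝ => (1 - 2*x + Sf δ x) * (1 - Sf δ x) ^ (1+δ))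
      ((-2 + s') * (1 - s) ^ (1+δ) + (1 - 2*a + s) * (-s' * (1+δ) * (1 - s) ^ ((1+δ)-1))) a :=
    hAd.mul hUd
  have hDd : HasDerivAt (fun x : ℝ => (1 - 2*x - Sf δ x) * (1 + Sf δ x) ^ (1+δ))
      ((-2 - s') * (1 + s) ^ (1+δ) + (1 - 2*a - s) * (s' * (1+δ) * (1 + s) ^ ((1+δ)-1))) a := by
    have hBd : HasDerivAt (fun x : ℝ => 1 - 2*x - Sf δ x) (-2 - s') a := by
      have h1 : HasDerivAt (fun x : ℝ => 1 - 2*x) (-2) a := by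
        simpa using ((hasDerivAt_id a).const_mul (2:ℝ)).const_sub 1
      exact h1.sub hsd
    exact hBd.mul hVd
  have hDne : (1 - 2*a - s) * (1 + s) ^ (1+δ) ≠ 0 := by
    have : (0:ℝ) < (1 - 2*a - s) * (1 + s) ^ (1+δ) :=
      mul_pos hBpos (Real.rpow_pos_of_pos hv1 _)
    exact ne_of_gt this
  have hGd : HasDerivAt (G δ)
      ((((-2 + s') * (1 - s) ^ (1+δ) + (1 - 2*a + s) * (-s' * (1+δ) * (1 - s) ^ ((1+δ)-1)))
          * ((1 - 2*a - s) * (1 + s) ^ (1+δ))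
        - ((1 - 2*a + s) * (1 - s) ^ (1+δ))
          * ((-2 - s') * (1 + s) ^ (1+δ) + (1 - 2*a - s) * (s' * (1+δ) * (1 + s) ^ ((1+δ)-1))))
        / ((1 - 2*a - s) * (1 + s) ^ (1+δ))^2) a := by
    have := hNd.div hDd hDne
    rw [show G δ = (fun x : ℝ => (1 - 2*x + Sf δ x) * (1 - Sf δ x) ^ (1+δ)) /
      (fun x : ℝ => (1 - 2*x - Sf δ x) * (1 + Sf δ x) ^ (1+δ)) from rfl]
    simpa [G, hs_def] using this
  refine ⟨_, ?_, hGd⟩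
  -- now prove negativity
  set u : ℝ := (1 - s) ^ δ with hu_def
  set v : ℝ := (1 + s) ^ δ with hv_def
  have hu0 : 0 < u := Real.rpow_pos_of_pos hu1 _
  have hv0 : 0 < v := Real.rpow_pos_of_pos hv1 _
  have hsplit1 : (1 - s) ^ (1+δ) = (1 - s) * u := by
    rw [hu_def, Real.rpow_add hu1, Real.rpow_one]
  have hsplit2 : (1 + s) ^ (1+δ) = (1 + s) * v := by
    rw [hv_def, Real.rpow_add hv1, Real.rpow_one]
  have hexp : (1+δ) - 1 = δ := by ring
  have hsplit3 : (1 - s) ^ ((1+δ)-1) = u := by rw [hexp]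
  have hsplit4 : (1 + s) ^ ((1+δ)-1) = v := by rw [hexp]
  rw [hsplit1, hsplit2, hsplit3, hsplit4]
  set W : ℝ := (1 - s^2) * (4*s^2 + 2*(4*(1-δ^2)*a - 2)*(1-2*a))
      - 2*(1+δ)*(4*(1-δ^2)*a - 2)*((1-2*a)^2 - s^2) with hW_def
  have hnum : ((-2 + s') * ((1-s)*u) + (1 - 2*a + s) * (-s' * (1+δ) * u))
          * ((1 - 2*a - s) * ((1+s)*v))
        - ((1 - 2*a + s) * ((1-s)*u))
          * ((-2 - s') * ((1+s)*v) + (1 - 2*a - s) * (s' * (1+δ) * v))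
      = u * v * W / s := by
    rw [hs'_def, hW_def]
    field_simp
    ring
  have hWval : W = 16*δ^2*a^2*(δ - 1 - 2*(1-δ^2)*a*δ) := by
    rw [hW_def, hsq]; ring
  have hWneg : W < 0 := by
    rw [hWval]
    have h1 : δ - 1 - 2*(1-δ^2)*a*δ < 0 := by
      nlinarith [mul_pos (mul_pos hc ha0) hδ0]
    have h2 : 0 < 16*δ^2*a^2 := by positivity
    nlinarith
  rw [hnum]
  apply div_neg_of_neg_of_pos
  · apply div_neg_of_neg_of_pos _ hs_pos
    exact mul_neg_of_pos_of_neg (by positivity) hWneg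
  · have h : (0:ℝ) < (1 - 2*a - s) * ((1+s)*v) := by positivity
    exact pow_pos h 2

/-- `G` is strictly decreasing on `(0, 1/(2+2δ))`, tends to `1` at the right endpoint,
and hence exceeds `1` on the whole interval. -/
theorem G_strictAnti_and_limit (δ : ℝ) (hδ : δ ∈ Set.Ioo (0:ℝ) 1) :
    StrictAntiOn (G δ) (Set.Ioo 0 (1/(2+2*δ))) ∧
    Tendsto (G δ) (nhdsWithin (1/(2+2*δ)) (Set.Ioo 0 (1/(2+2*δ)))) (nhds 1) ∧
    ∀ a ∈ Set.Ioo (0:ℝ) (1/(2+2*δ)), 1 < G δ a := by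
  obtain ⟨hδ0, hδ1⟩ := hδ
  set a₀ : ℝ := 1/(2+2*δ) with ha₀_def
  have h2δ : (0:ℝ) < 2+2*δ := by linarith
  have ha₀pos : 0 < a₀ := by positivity
  -- strict antitonicity
  have hanti : StrictAntiOn (G δ) (Set.Ioo 0 a₀) := by
    apply strictAntiOn_of_deriv_neg (convex_Ioo _ _)
    · intro x hx
      obtain ⟨V, hV, hd⟩ := G_hasDeriv δ hδ0 hδ1 hx.1 hx.2
      exact hd.continuousAt.continuousWithinAt
    · intro x hx
      rw [interior_Ioo] at hx
      obtain ⟨V, hV, hd⟩ := G_hasDeriv δ hδ0 hδ1 hx.1 hx.2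
      rw [hd.deriv]; exact hV
  -- value at the endpoint
  have hS0 : Sf δ a₀ = 0 := by
    have h : 1 - 4*a₀ + 4*(1-δ^2)*a₀^2 = 0 := by
      rw [ha₀_def]; field_simp; ring
    rw [Sf, h, Real.sqrt_zero]
  have h12 : 1 - 2*a₀ = 2*δ/(2+2*δ) := by rw [ha₀_def]; field_simp; ring
  have h12pos : 0 < 1 - 2*a₀ := by rw [h12]; positivity
  have hGa₀ : G δ a₀ = 1 := by
    rw [G, hS0]
    simp only [sub_zero, add_zero, Real.one_rpow, mul_one]
    exact div_self (ne_of_gt h12pos)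
  -- continuity at the endpoint
  have hScont : Continuous (Sf δ) := by
    apply Real.continuous_sqrt.comp
    continuity
  have hcont : ContinuousAt (G δ) a₀ := by
    have hnum : ContinuousAt (fun a => (1 - 2*a + Sf δ a) * (1 - Sf δ a) ^ (1+δ)) a₀ := by
      apply ContinuousAt.mul
      · exact (continuousAt_const.sub (continuousAt_const.mul continuousAt_id)).add
          hScont.continuousAt
      · apply ContinuousAt.rpow_const
          (continuousAt_const.sub hScont.continuousAt)
        left; show 1 - Sf δ a₀ ≠ 0; rw [hS0]; norm_num
    have hden : ContinuousAt (fun a => (1 - 2*a - Sf δ a) * (1 + Sf δ a) ^ (1+δ)) a₀ := by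
      apply ContinuousAt.mul
      · exact (continuousAt_const.sub (continuousAt_const.mul continuousAt_id)).sub
          hScont.continuousAt
      · apply ContinuousAt.rpow_const
          (continuousAt_const.add hScont.continuousAt)
        left; show 1 + Sf δ a₀ ≠ 0; rw [hS0]; norm_num
    apply hnum.div hden
    rw [hS0]
    simp only [sub_zero, add_zero, Real.one_rpow, mul_one]
    exact ne_of_gt h12pos
  have hlim : Tendsto (G δ) (nhdsWithin a₀ (Set.Ioo 0 a₀)) (nhds 1) := by
    rw [← hGa₀]
    exact hcont.continuousWithinAt.tendsto
  refine ⟨hanti, hlim, ?_⟩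
  -- G > 1 on the interval
  intro a ha
  haveI : (nhdsWithin a₀ (Set.Ioo 0 a₀)).NeBot := by
    apply mem_closure_iff_nhdsWithin_neBot.mp
    rw [closure_Ioo (ne_of_lt ha₀pos)]
    exact ⟨ha₀pos.le, le_refl _⟩
  set b : ℝ := (a + a₀)/2 with hb_def
  have hab : a < b := by rw [hb_def]; linarith [ha.2]
  have hba₀ : b < a₀ := by rw [hb_def]; linarith [ha.2]
  have hbmem : b ∈ Set.Ioo 0 a₀ := ⟨by rw [hb_def]; linarith [ha.1], hba₀⟩
  have h1 : G δ b < G δ a := hanti ha hbmem hab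
  have h2 : (1:ℝ) ≤ G δ b := by
    apply le_of_tendsto hlim
    filter_upwards [self_mem_nhdsWithin,
      mem_nhdsWithin_of_mem_nhds (Ioi_mem_nhds hba₀)] with x hx1 hx2
    exact (hanti hbmem hx1 hx2).le
  linarith
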